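/- In the setting of the previous theorem, equality ‖uⁿ⁺¹‖ = ‖uⁿ‖ (discrete energy conservation at step n) holds if and only if c_h(u^{n+1/2}; u^{n+1/2}, u^{n+1/2}) + d_h(u^{n+1/2}, u^{n+1/2}) = 0. -/

import Mathlib

open scoped RealInnerProductSpace

/-- Discrete energy conservation characterization: in the Crank–Nicolson scheme,
`‖uⁿ⁺¹‖ = ‖uⁿ‖` holds iff `c(u^{n+1/2}; u^{n+1/2}, u^{n+1/2}) + d(u^{n+1/2}, u^{n+1/2}) = 0`. -/
theorem discrete_energy_conservation_iff
    {V : Type*} [NormedAddCommGroup V] [InnerProductSpace ℝ V]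
    [FiniteDimensional ℝ V]
    (c : V → V →ₗ[ℝ] V →ₗ[ℝ] ℝ) (d : V →ₗ[ℝ] V →ₗ[ℝ] ℝ)
    (hc : ∀ v : V, 0 ≤ c v v v) (hd : ∀ v : V, 0 ≤ d v v)
    (u : ℕ → V) (τ : ℕ → ℝ) (hτ : ∀ n, 0 < τ n)
    (heq : ∀ n : ℕ, ∀ v : V,
      ⟪(τ n)⁻¹ • (u (n + 1) - u n), v⟫
        + c ((2 : ℝ)⁻¹ • (u (n + 1) + u n)) ((2 : ℝ)⁻¹ • (u (n + 1) + u n)) v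
        + d ((2 : ℝ)⁻¹ • (u (n + 1) + u n)) v = 0) :
    ∀ n : ℕ,
      (‖u (n + 1)‖ = ‖u n‖ ↔
        c ((2 : ℝ)⁻¹ • (u (n + 1) + u n)) ((2 : ℝ)⁻¹ • (u (n + 1) + u n))
            ((2 : ℝ)⁻¹ • (u (n + 1) + u n))
          + d ((2 : ℝ)⁻¹ • (u (n + 1) + u n)) ((2 : ℝ)⁻¹ • (u (n + 1) + u n)) = 0) := by
  intro n
  set m := (2 : ℝ)⁻¹ • (u (n + 1) + u n) with hm
  set A := c m m m + d m m with hA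
  have h := heq n m
  have hinner : ⟪(τ n)⁻¹ • (u (n + 1) - u n), m⟫
      = (τ n)⁻¹ * 2⁻¹ * (‖u (n + 1)‖ ^ 2 - ‖u n‖ ^ 2) := by
    rw [hm, real_inner_smul_left, real_inner_smul_right, inner_sub_left,
      inner_add_right, inner_add_right, real_inner_self_eq_norm_sq,
      real_inner_self_eq_norm_sq, real_inner_comm (u (n+1)) (u n)]
    ring
  have hτn := (hτ n).ne'
  have key : ‖u (n + 1)‖ ^ 2 - ‖u n‖ ^ 2 = -(2 * τ n) * A := by
    have : (τ n)⁻¹ * 2⁻¹ * (‖u (n + 1)‖ ^ 2 - ‖u n‖ ^ 2) + A = 0 := by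
      rw [← hm] at h; rw [← hinner]; linarith [h]
    field_simp at this
    linarith
  constructor
  · intro hnorm
    have h2 : ‖u (n + 1)‖ ^ 2 - ‖u n‖ ^ 2 = 0 := by rw [hnorm]; ring
    have : -(2 * τ n) * A = 0 := by linarith [key]
    have h3 : (2 * τ n) ≠ 0 := by positivity
    rcases mul_eq_zero.mp this with h4 | h4
    · exact absurd h4 (by simpa using h3)
    · exact h4
  · intro hA0
    have h2 : ‖u (n + 1)‖ ^ 2 = ‖u n‖ ^ 2 := by
      have := key; rw [hA0, mul_zero] at this; linarith
    exact (sq_eq_sq₀ (norm_nonneg _) (norm_nonneg _)).mp (by simpa [sq] using h2)
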